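/- Let X = (X_n)_{n≥1} be an exchangeable sequence with values in the finite set E = {1,…,d}, and define Y_n = (#{1 ≤ i ≤ n : X_i = k})_{k=1,…,d} ∈ ℕ₀^d. Then Y = (Y_n)_{n≥0} is a Markov chain. -/

import Mathlib

open MeasureTheory Filter

open Finset
open scoped ENNReal

section EmpiricalAuxNS



variable {Ω : Type*} [MeasurableSpace Ω] {d : ℕ} (X : ℕ → Ω → Fin d)

/-- cylinder event -/
def ecyl (m : ℕ) (x : Fin m → Fin d) : Set Ω := {ω | ∀ i : Fin m, X i ω = x i}

/-- count of value `j` among first `i` coordinates of a tuple -/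
def ecnt {m : ℕ} (x : Fin m → Fin d) (i : ℕ) (j : Fin d) : ℕ :=
  ∑ k : Fin m, if k.val < i ∧ x k = j then 1 else 0

lemma ecnt_init {m : ℕ} (x : Fin (m + 1) → Fin d) {i : ℕ} (hi : i ≤ m) (j : Fin d) :
    ecnt (Fin.init x) i j = ecnt x i j := by
  classical
  unfold ecnt
  rw [Fin.sum_univ_castSucc (f := fun k : Fin (m+1) => if k.val < i ∧ x k = j then 1 else 0)]
  have : ¬ ((Fin.last m).val < i ∧ x (Fin.last m) = j) := by
    simp only [Fin.val_last, not_and]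
    intro h; omega
  rw [if_neg this, add_zero]
  refine Finset.sum_congr rfl fun k _ => ?_
  simp [Fin.init, Fin.castSucc]
  congr

lemma ecnt_full {m : ℕ} (x : Fin m → Fin d) (j : Fin d) :
    ecnt x m j = ∑ k : Fin m, if x k = j then 1 else 0 := by
  classical
  refine Finset.sum_congr rfl fun k _ => ?_
  simp [k.isLt]

lemma ecnt_succ {n : ℕ} (x : Fin (n + 1) → Fin d) (j : Fin d) :
    ecnt x (n + 1) j = ecnt x n j + (if x (Fin.last n) = j then 1 else 0) := by
  classical
  unfold ecnt
  rw [Fin.sum_univ_castSucc (f := fun k : Fin (n+1) => if k.val < n + 1 ∧ x k = j then 1 else 0),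
      Fin.sum_univ_castSucc (f := fun k : Fin (n+1) => if k.val < n ∧ x k = j then 1 else 0)]
  have h1 : ¬ ((Fin.last n).val < n ∧ x (Fin.last n) = j) := by
    simp only [Fin.val_last, not_and]; intro h; omega
  rw [if_neg h1, add_zero]
  congr 1
  · refine Finset.sum_congr rfl fun k _ => ?_
    have hk1 : (k : ℕ) < n + 1 := k.isLt.trans (Nat.lt_succ_self n)
    have hk2 : ¬ ((k : ℕ) < n ∧ x k.castSucc = j) → ¬ (x k.castSucc = j) := fun h hx => h ⟨k.isLt, hx⟩
    by_cases hx : x k.castSucc = j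
    · simp [hx, hk1, k.isLt]
    · simp [hx]
  · simp [Fin.val_last]

/-- relation between `ecnt` of the trace and the `Y` count -/
lemma ecnt_trace (ω : Ω) {m i : ℕ} (hi : i ≤ m) (j : Fin d) :
    ecnt (fun k : Fin m => X k ω) i j = ((Finset.range i).filter fun k => X k ω = j).card := by
  classical
  unfold ecnt
  rw [Finset.card_filter]
  rw [Fin.sum_univ_eq_sum_range (f := fun k : ℕ => if k < i ∧ X k ω = j then 1 else 0)]
  rw [← Finset.sum_subset (Finset.range_subset_range.mpr hi) (by
    intro k hk hnk
    have : ¬ k < i := by simpa using hnk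
    simp [this])]
  refine Finset.sum_congr rfl fun k hk => ?_
  have : k < i := Finset.mem_range.mp hk
  simp [this]

section Prob

variable (P : MeasureTheory.Measure Ω)

lemma meas_ecyl (hX : ∀ n, Measurable (X n)) (m : ℕ) (x : Fin m → Fin d) :
    MeasurableSet (ecyl X m x) := by
  have : ecyl X m x = ⋂ i : Fin m, (X i) ⁻¹' {x i} := by
    ext ω; simp [ecyl, Set.mem_iInter]
  rw [this]
  exact MeasurableSet.iInter fun i => hX i (measurableSet_singleton _)

lemma ecyl_disjoint (m : ℕ) (x y : Fin m → Fin d) (hxy : x ≠ y) :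
    Disjoint (ecyl X m x) (ecyl X m y) := by
  rw [Set.disjoint_iff_inter_eq_empty]
  by_contra h
  obtain ⟨ω, hx, hy⟩ := Set.nonempty_iff_ne_empty.mpr h
  exact hxy (funext fun i => (hx i).symm.trans (hy i))

lemma prob_decomp (hX : ∀ n, Measurable (X n)) (m : ℕ)
    (Q : (Fin m → Fin d) → Prop) [DecidablePred Q] :
    P {ω | Q (fun i : Fin m => X i ω)} = ∑ x ∈ Finset.univ.filter Q, P (ecyl X m x) := by
  classical
  have hset : {ω | Q (fun i : Fin m => X i ω)} = ⋃ x ∈ Finset.univ.filter Q, ecyl X m x := by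
    ext ω
    simp only [Set.mem_setOf_eq, Set.mem_iUnion, Finset.mem_filter, Finset.mem_univ, true_and]
    constructor
    · intro h
      exact ⟨fun i => X i ω, h, fun i => rfl⟩
    · rintro ⟨x, hQ, hx⟩
      have : (fun i : Fin m => X i ω) = x := funext fun i => hx i
      rwa [this]
  rw [hset]
  exact measure_biUnion_finset
    (fun x _ y _ hxy => ecyl_disjoint X m x y hxy)
    (fun x _ => meas_ecyl X hX m x)

lemma ecyl_perm [MeasureTheory.IsProbabilityMeasure P] (hX : ∀ n, Measurable (X n))
    (hexch : ∀ σ : Equiv.Perm ℕ, {i | σ i ≠ i}.Finite →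
      P.map (fun ω => fun n => X (σ n) ω) = P.map (fun ω => fun n => X n ω))
    (m : ℕ) (σ : Equiv.Perm (Fin m)) (x : Fin m → Fin d) :
    P (ecyl X m (x ∘ σ)) = P (ecyl X m x) := by
  classical
  set τ : Equiv.Perm ℕ := σ.extendDomain (Fin.equivSubtype (n := m)) with hτ
  have hfin : {i | τ i ≠ i}.Finite := by
    apply (Set.finite_Iio m).subset
    intro i hi
    simp only [Set.mem_setOf_eq] at hi
    by_contra hge
    exact hi (Equiv.Perm.extendDomain_apply_not_subtype σ Fin.equivSubtype (by simpa using hge))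
  have hτ_apply : ∀ i : Fin m, τ (i : ℕ) = ((σ i : Fin m) : ℕ) := by
    intro i
    rw [hτ, Equiv.Perm.extendDomain_apply_subtype σ Fin.equivSubtype i.isLt]
    simp [Fin.equivSubtype]
  have hmap := hexch τ hfin
  set B : Set (ℕ → Fin d) := ⋂ i : Fin m, (fun f : ℕ → Fin d => f i) ⁻¹' {x (σ i)} with hB
  have hBm : MeasurableSet B :=
    MeasurableSet.iInter fun i => (measurable_pi_apply (i : ℕ)) (measurableSet_singleton _)
  have hmeas1 : Measurable (fun ω => fun n : ℕ => X (τ n) ω) :=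
    measurable_pi_lambda _ fun n => hX (τ n)
  have hmeas2 : Measurable (fun ω => fun n : ℕ => X n ω) :=
    measurable_pi_lambda _ fun n => hX n
  have h1 := MeasureTheory.Measure.map_apply (μ := P) hmeas1 hBm
  have h2 := MeasureTheory.Measure.map_apply (μ := P) hmeas2 hBm
  rw [hmap] at h1
  have key : P ((fun ω => fun n : ℕ => X (τ n) ω) ⁻¹' B)
      = P ((fun ω => fun n : ℕ => X n ω) ⁻¹' B) := by rw [← h1, ← h2]
  have e1 : (fun ω => fun n : ℕ => X (τ n) ω) ⁻¹' B = ecyl X m x := by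
    ext ω
    simp only [hB, Set.mem_preimage, Set.mem_iInter, Set.mem_singleton_iff,
      ecyl, Set.mem_setOf_eq]
    constructor
    · intro h j
      have := h (σ.symm j)
      rw [hτ_apply (σ.symm j), Equiv.apply_symm_apply] at this
      simpa using this
    · intro h i
      rw [hτ_apply]
      exact h (σ i)
  have e2 : (fun ω => fun n : ℕ => X n ω) ⁻¹' B = ecyl X m (x ∘ σ) := by
    ext ω
    simp [hB, ecyl]
  rw [← e2, ← key, e1]

lemma ecyl_count_eq [MeasureTheory.IsProbabilityMeasure P] (hX : ∀ n, Measurable (X n))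
    (hexch : ∀ σ : Equiv.Perm ℕ, {i | σ i ≠ i}.Finite →
      P.map (fun ω => fun n => X (σ n) ω) = P.map (fun ω => fun n => X n ω))
    (m : ℕ) (x y : Fin m → Fin d) (h : ∀ j, ecnt x m j = ecnt y m j) :
    P (ecyl X m x) = P (ecyl X m y) := by
  classical
  have hcard : ∀ j : Fin d, Fintype.card {i : Fin m // y i = j} = Fintype.card {i : Fin m // x i = j} := by
    intro j
    rw [Fintype.card_subtype, Fintype.card_subtype, Finset.card_filter, Finset.card_filter]
    have := (h j).symm
    rwa [ecnt_full, ecnt_full] at this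
  set e : ∀ j : Fin d, {i : Fin m // y i = j} ≃ {i : Fin m // x i = j} :=
    fun j => Fintype.equivOfCardEq (hcard j) with he
  set σ : Equiv.Perm (Fin m) :=
    (Equiv.sigmaFiberEquiv y).symm.trans ((Equiv.sigmaCongrRight e).trans (Equiv.sigmaFiberEquiv x)) with hσ
  have hxσ : x ∘ σ = y := by
    funext i
    show x (σ i) = y i
    have hσi : σ i = ((e (y i)) ⟨i, rfl⟩).1 := by
      simp [hσ, Equiv.sigmaFiberEquiv]
    rw [hσi]
    exact ((e (y i)) ⟨i, rfl⟩).2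
  rw [← hxσ]
  exact (ecyl_perm X P hX hexch m σ x).symm

end Prob

lemma card_extend (n : ℕ) (pn z : Fin d → ℕ) (Q : (Fin n → Fin d) → Prop) [DecidablePred Q]
    (hQ : ∀ x, Q x → ∀ j, ecnt x n j = pn j) :
    (Finset.univ.filter
        (fun y : Fin (n+1) → Fin d => Q (Fin.init y) ∧ ∀ j, ecnt y (n+1) j = z j)).card
      = (Finset.univ.filter Q).card *
        (Finset.univ.filter
          (fun j0 : Fin d => ∀ j, z j = pn j + if j0 = j then 1 else 0)).card := by
  classical
  rw [← Finset.card_product]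
  apply Finset.card_nbij' (fun y => (Fin.init y, y (Fin.last n)))
    (fun pr => Fin.snoc pr.1 pr.2)
  · intro y hy
    rcases Finset.mem_filter.mp hy with ⟨-, hQy, hz⟩
    refine Finset.mem_product.mpr ⟨Finset.mem_filter.mpr ⟨Finset.mem_univ _, hQy⟩,
      Finset.mem_filter.mpr ⟨Finset.mem_univ _, ?_⟩⟩
    intro j
    have hzj := hz j
    rw [ecnt_succ, ← ecnt_init y (le_refl n), hQ _ hQy j] at hzj
    rw [← hzj]
  · rintro ⟨x, j0⟩ hpr
    rcases Finset.mem_product.mp hpr with ⟨hx, hj0⟩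
    have hQx := (Finset.mem_filter.mp hx).2
    have hj0' := (Finset.mem_filter.mp hj0).2
    refine Finset.mem_filter.mpr ⟨Finset.mem_univ _, ?_, ?_⟩
    · rw [Fin.init_snoc]; exact hQx
    · intro j
      rw [ecnt_succ, ← ecnt_init _ (le_refl n), Fin.init_snoc, hQ _ hQx j]
      simp only [Fin.snoc_last]
      exact (hj0' j).symm
  · intro y _
    exact Fin.snoc_init_self y
  · rintro ⟨x, j0⟩ _
    simp [Fin.init_snoc, Fin.snoc_last]



end EmpiricalAuxNS

/-- If X is an exchangeable sequence with values in the finite set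
E = {1,…,d} and Y_n is the vector of empirical counts, then Y is a Markov chain:
P(Y_{n+1} = z | Y_n = y_n, …, Y_1 = y_1) = P(Y_{n+1} = z | Y_n = y_n) whenever
the conditioning event has positive probability. -/
theorem empirical_counts_markov
    {Ω : Type*} [MeasurableSpace Ω] (P : Measure Ω) [IsProbabilityMeasure P]
    (d : ℕ) (hd : 0 < d)
    (X : ℕ → Ω → Fin d) (hX : ∀ n, Measurable (X n))
    -- exchangeability
    (hexch : ∀ σ : Equiv.Perm ℕ, {i | σ i ≠ i}.Finite →
      P.map (fun ω => fun n => X (σ n) ω) = P.map (fun ω => fun n => X n ω))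
    -- Y_n = vector of empirical counts of X_1,…,X_n (i.e. of X_0,…,X_{n-1})
    (Y : ℕ → Ω → Fin d → ℕ)
    (hYdef : ∀ n ω j, Y n ω j = ((Finset.range n).filter (fun i => X i ω = j)).card)
    (n : ℕ) (path : ℕ → Fin d → ℕ) (z : Fin d → ℕ)
    (hpath : ∀ i ≤ n, ∑ j, path i j = i)
    (hpos : 0 < P (⋂ i ∈ Finset.Icc 1 n, {ω | Y i ω = path i})) :
    (P ((⋂ i ∈ Finset.Icc 1 n, {ω | Y i ω = path i}) ∩ {ω | Y (n + 1) ω = z})).toReal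
        / (P (⋂ i ∈ Finset.Icc 1 n, {ω | Y i ω = path i})).toReal
      = (P ({ω | Y n ω = path n} ∩ {ω | Y (n + 1) ω = z})).toReal
        / (P {ω | Y n ω = path n}).toReal := by
  classical
  have hYiff : ∀ (m i : ℕ), i ≤ m → ∀ (w : Fin d → ℕ) (ω : Ω),
      Y i ω = w ↔ ∀ j, ecnt (fun k : Fin m => X k ω) i j = w j := by
    intro m i hi w ω
    rw [funext_iff]
    refine forall_congr' fun j => ?_
    rw [hYdef i ω j, ecnt_trace X ω hi j]
  set QA : (Fin n → Fin d) → Prop :=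
    fun x => ∀ i ∈ Finset.Icc 1 n, ∀ j, ecnt x i j = path i j with hQA
  set QT : (Fin n → Fin d) → Prop := fun x => ∀ j, ecnt x n j = path n j with hQT
  set QA' : (Fin (n+1) → Fin d) → Prop :=
    fun y => QA (Fin.init y) ∧ ∀ j, ecnt y (n+1) j = z j with hQA'
  set QT' : (Fin (n+1) → Fin d) → Prop :=
    fun y => QT (Fin.init y) ∧ ∀ j, ecnt y (n+1) j = z j with hQT'
  have hinit : ∀ ω : Ω, Fin.init (fun k : Fin (n+1) => X k ω) = fun k : Fin n => X k ω := by
    intro ω; funext k; simp [Fin.init, Fin.castSucc]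
  -- event identifications
  have EA : (⋂ i ∈ Finset.Icc 1 n, {ω | Y i ω = path i})
      = {ω | QA (fun k : Fin n => X k ω)} := by
    ext ω
    simp only [Set.mem_iInter, Set.mem_setOf_eq, hQA]
    refine forall_congr' fun i => forall_congr' fun hi => ?_
    exact hYiff n i (Finset.mem_Icc.mp hi).2 (path i) ω
  have ET : {ω | Y n ω = path n} = {ω | QT (fun k : Fin n => X k ω)} := by
    ext ω
    simp only [Set.mem_setOf_eq, hQT]
    exact hYiff n n le_rfl (path n) ω
  have EB : ((⋂ i ∈ Finset.Icc 1 n, {ω | Y i ω = path i}) ∩ {ω | Y (n + 1) ω = z})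
      = {ω | QA' (fun k : Fin (n+1) => X k ω)} := by
    rw [EA]
    ext ω
    simp only [Set.mem_inter_iff, Set.mem_setOf_eq, hQA']
    rw [hinit ω]
    exact and_congr Iff.rfl (hYiff (n+1) (n+1) le_rfl z ω)
  have ET' : ({ω | Y n ω = path n} ∩ {ω | Y (n + 1) ω = z})
      = {ω | QT' (fun k : Fin (n+1) => X k ω)} := by
    rw [ET]
    ext ω
    simp only [Set.mem_inter_iff, Set.mem_setOf_eq, hQT']
    rw [hinit ω]
    exact and_congr Iff.rfl (hYiff (n+1) (n+1) le_rfl z ω)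
  -- decompositions
  have PA : P (⋂ i ∈ Finset.Icc 1 n, {ω | Y i ω = path i})
      = ∑ x ∈ Finset.univ.filter QA, P (ecyl X n x) := by
    rw [EA]; exact prob_decomp X P hX n QA
  have PT : P {ω | Y n ω = path n}
      = ∑ x ∈ Finset.univ.filter QT, P (ecyl X n x) := by
    rw [ET]; exact prob_decomp X P hX n QT
  have PB : P ((⋂ i ∈ Finset.Icc 1 n, {ω | Y i ω = path i}) ∩ {ω | Y (n + 1) ω = z})
      = ∑ x ∈ Finset.univ.filter QA', P (ecyl X (n+1) x) := by
    rw [EB]; exact prob_decomp X P hX (n+1) QA'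
  have PT' : P ({ω | Y n ω = path n} ∩ {ω | Y (n + 1) ω = z})
      = ∑ x ∈ Finset.univ.filter QT', P (ecyl X (n+1) x) := by
    rw [ET']; exact prob_decomp X P hX (n+1) QT'
  -- full-count facts
  have hpath0 : ∀ j, path 0 j = 0 := fun j =>
    (Finset.sum_eq_zero_iff.mp (hpath 0 (Nat.zero_le n))) j (Finset.mem_univ j)
  have hQAcnt : ∀ x : Fin n → Fin d, QA x → ∀ j, ecnt x n j = path n j := by
    intro x hx j
    rw [hQA] at hx
    rcases Nat.eq_zero_or_pos n with h0 | hp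
    · subst h0
      rw [hpath0 j]
      simp [ecnt]
    · exact hx n (Finset.mem_Icc.mpr ⟨hp, le_rfl⟩) j
  have hQTcnt : ∀ x : Fin n → Fin d, QT x → ∀ j, ecnt x n j = path n j := by
    intro x hx
    rw [hQT] at hx
    exact hx
  have hST : Finset.univ.filter QA ⊆ Finset.univ.filter QT := by
    intro x hx
    rw [Finset.mem_filter] at hx ⊢
    refine ⟨hx.1, ?_⟩
    rw [hQT]
    exact hQAcnt x hx.2
  -- denominators
  have hSne : (Finset.univ.filter QA).Nonempty := by
    by_contra h
    rw [Finset.not_nonempty_iff_eq_empty] at h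
    rw [PA, h, Finset.sum_empty] at hpos
    exact lt_irrefl 0 hpos
  obtain ⟨x₀, hx₀⟩ := hSne
  have hx₀Q : QA x₀ := (Finset.mem_filter.mp hx₀).2
  set p := P (ecyl X n x₀) with hpdef
  have hconstS : ∀ x ∈ Finset.univ.filter QA, P (ecyl X n x) = p := by
    intro x hx
    apply ecyl_count_eq X P hX hexch n x x₀
    intro j
    rw [hQAcnt x (Finset.mem_filter.mp hx).2 j, hQAcnt x₀ hx₀Q j]
  have hconstT : ∀ x ∈ Finset.univ.filter QT, P (ecyl X n x) = p := by
    intro x hx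
    apply ecyl_count_eq X P hX hexch n x x₀
    intro j
    rw [hQTcnt x (Finset.mem_filter.mp hx).2 j, hQAcnt x₀ hx₀Q j]
  have hPA : P (⋂ i ∈ Finset.Icc 1 n, {ω | Y i ω = path i})
      = ((Finset.univ.filter QA).card : ℝ≥0∞) * p := by
    rw [PA, Finset.sum_congr rfl hconstS, Finset.sum_const, nsmul_eq_mul]
  have hPT : P {ω | Y n ω = path n}
      = ((Finset.univ.filter QT).card : ℝ≥0∞) * p := by
    rw [PT, Finset.sum_congr rfl hconstT, Finset.sum_const, nsmul_eq_mul]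
  have hp_ne_top : p ≠ ⊤ := measure_ne_top P _
  have hp_pos : p ≠ 0 := by
    intro h0
    rw [hPA, h0, mul_zero] at hpos
    exact lt_irrefl 0 hpos
  have hScard : ((Finset.univ.filter QA).card : ℝ) ≠ 0 := by
    have : (Finset.univ.filter QA).Nonempty := ⟨x₀, hx₀⟩
    exact_mod_cast Finset.card_ne_zero_of_mem hx₀
  have hTcard : ((Finset.univ.filter QT).card : ℝ) ≠ 0 := by
    exact_mod_cast Finset.card_ne_zero_of_mem (hST hx₀)
  -- card relations
  have cardS' : (Finset.univ.filter QA').card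
      = (Finset.univ.filter QA).card *
        (Finset.univ.filter
          (fun j0 : Fin d => ∀ j, z j = path n j + if j0 = j then 1 else 0)).card := by
    exact card_extend n (path n) z QA hQAcnt
  have cardT' : (Finset.univ.filter QT').card
      = (Finset.univ.filter QT).card *
        (Finset.univ.filter
          (fun j0 : Fin d => ∀ j, z j = path n j + if j0 = j then 1 else 0)).card := by
    exact card_extend n (path n) z QT hQTcnt
  by_cases hS' : (Finset.univ.filter QA').Nonempty
  · -- numerators are nonzero multiples of a common value
    obtain ⟨x₁, hx₁⟩ := hS'
    have hx₁Q : QA' x₁ := (Finset.mem_filter.mp hx₁).2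
    set q := P (ecyl X (n+1) x₁) with hqdef
    have hx₁cnt : ∀ j, ecnt x₁ (n+1) j = z j := by
      rw [hQA'] at hx₁Q; exact hx₁Q.2
    have hconstS' : ∀ x ∈ Finset.univ.filter QA', P (ecyl X (n+1) x) = q := by
      intro x hx
      apply ecyl_count_eq X P hX hexch (n+1) x x₁
      intro j
      have hxQ := (Finset.mem_filter.mp hx).2
      rw [hQA'] at hxQ
      rw [hxQ.2 j, hx₁cnt j]
    have hconstT' : ∀ x ∈ Finset.univ.filter QT', P (ecyl X (n+1) x) = q := by
      intro x hx
      apply ecyl_count_eq X P hX hexch (n+1) x x₁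
      intro j
      have hxQ := (Finset.mem_filter.mp hx).2
      rw [hQT'] at hxQ
      rw [hxQ.2 j, hx₁cnt j]
    have hPB : P ((⋂ i ∈ Finset.Icc 1 n, {ω | Y i ω = path i}) ∩ {ω | Y (n + 1) ω = z})
        = ((Finset.univ.filter QA').card : ℝ≥0∞) * q := by
      rw [PB, Finset.sum_congr rfl hconstS', Finset.sum_const, nsmul_eq_mul]
    have hPT' : P ({ω | Y n ω = path n} ∩ {ω | Y (n + 1) ω = z})
        = ((Finset.univ.filter QT').card : ℝ≥0∞) * q := by
      rw [PT', Finset.sum_congr rfl hconstT', Finset.sum_const, nsmul_eq_mul]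
    have hq_ne_top : q ≠ ⊤ := measure_ne_top P _
    rw [hPA, hPB, hPT, hPT', cardS', cardT']
    rw [ENNReal.toReal_mul, ENNReal.toReal_mul, ENNReal.toReal_mul, ENNReal.toReal_mul]
    rw [ENNReal.toReal_natCast, ENNReal.toReal_natCast, ENNReal.toReal_natCast, ENNReal.toReal_natCast]
    rw [Nat.cast_mul, Nat.cast_mul, mul_assoc, mul_assoc,
      mul_div_mul_left _ _ hScard, mul_div_mul_left _ _ hTcard]
  · -- numerators are both zero
    rw [Finset.not_nonempty_iff_eq_empty] at hS'
    have hT'e : Finset.univ.filter QT' = ∅ := by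
      have h0 : (Finset.univ.filter QA').card = 0 := by rw [hS', Finset.card_empty]
      rw [cardS'] at h0
      have hJ : (Finset.univ.filter
          (fun j0 : Fin d => ∀ j, z j = path n j + if j0 = j then 1 else 0)).card = 0 := by
        rcases Nat.mul_eq_zero.mp h0 with h | h
        · exact absurd h (Finset.card_ne_zero_of_mem hx₀)
        · exact h
      rw [← Finset.card_eq_zero, cardT', hJ, mul_zero]
    have h1 : P ((⋂ i ∈ Finset.Icc 1 n, {ω | Y i ω = path i}) ∩ {ω | Y (n + 1) ω = z}) = 0 := by
      rw [PB, hS', Finset.sum_empty]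
    have h2 : P ({ω | Y n ω = path n} ∩ {ω | Y (n + 1) ω = z}) = 0 := by
      rw [PT', hT'e, Finset.sum_empty]
    rw [h1, h2]
    simp
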